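/- Lower bound on the cumulative setup initiation: for all sufficiently small ε > 0 (specifically ε < 2(1−λ)/max(1−ν, 0⁺)), the fluid-limit quantity ξ(t) = ∫₀ᵗ λ(1 − p₀(q(s), δ(s), λ))·1{δ₀(s) > 0} ds satisfies ξ(t) ≥ ∫₀ᵗ (λ − εν/2 − q₁(s)) ds − ∫₀ᵗ 1{u(s) > 0} ds − ∫₀ᵗ 1{δ₁(s) > ε/2} ds. -/

import Mathlib

open Filter

/-- The coefficient `p₀(q, δ, λ)` of the fluid-limit dynamics, in terms of
`q₁, q₂, δ₀, δ₁`. -/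
noncomputable def fluidP0' (lam nu q1 q2 d0 d1 : ℝ) : ℝ :=
  if 1 - q1 - d0 - d1 > 0 then 1 else min (lam⁻¹ * (d1 * nu + q1 - q2)) 1

/-- Lower bound on the cumulative setup initiation (Fact 4 in the global-stability
proof): for all sufficiently small `ε > 0` (precisely, `ε(1 - ν) < 2(1 - λ)`), the
quantity `ξ(t) = ∫₀ᵗ λ(1 - p₀(s))·1{δ₀(s) > 0} ds` satisfies
`ξ(t) ≥ ∫₀ᵗ (λ - εν/2 - q₁(s)) ds - ∫₀ᵗ 1{u(s) > 0} ds - ∫₀ᵗ 1{δ₁(s) > ε/2} ds`. -/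
theorem xi_lower_bound (lam nu ε : ℝ) (hlam0 : 0 < lam) (hlam1 : lam < 1)
    (hnu : 0 < nu) (hε : 0 < ε) (hεsmall : ε * (1 - nu) < 2 * (1 - lam))
    (q1 q2 d0 d1 : ℝ → ℝ)
    (hq1cont : Continuous q1) (hq2cont : Continuous q2)
    (hd0cont : Continuous d0) (hd1cont : Continuous d1)
    -- the trajectory stays in E
    (hq2nonneg : ∀ s, 0 ≤ s → 0 ≤ q2 s) (hq21 : ∀ s, 0 ≤ s → q2 s ≤ q1 s)
    (hq1le : ∀ s, 0 ≤ s → q1 s ≤ 1)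
    (hd0mem : ∀ s, 0 ≤ s → d0 s ∈ Set.Icc (0:ℝ) 1)
    (hd1mem : ∀ s, 0 ≤ s → d1 s ∈ Set.Icc (0:ℝ) 1)
    (hEsum : ∀ s, 0 ≤ s → q1 s + d0 s + d1 s ≤ 1) :
    ∀ t, 0 ≤ t →
      (∫ s in (0:ℝ)..t, (lam - ε * nu / 2 - q1 s)) -
          (∫ s in (0:ℝ)..t, (if 1 - q1 s - d0 s - d1 s > 0 then (1:ℝ) else 0)) -
          (∫ s in (0:ℝ)..t, (if d1 s > ε / 2 then (1:ℝ) else 0)) ≤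
        ∫ s in (0:ℝ)..t,
          (if d0 s > 0 then
            lam * (1 - fluidP0' lam nu (q1 s) (q2 s) (d0 s) (d1 s)) else 0) := by
  intro t ht
  set g : ℝ → ℝ := fun s => lam - ε * nu / 2 - q1 s with hgdef
  set iu : ℝ → ℝ := fun s => if 1 - q1 s - d0 s - d1 s > 0 then (1:ℝ) else 0 with hiudef
  set i1 : ℝ → ℝ := fun s => if d1 s > ε / 2 then (1:ℝ) else 0 with hi1def
  set f : ℝ → ℝ := fun s => if d0 s > 0 then
      lam * (1 - fluidP0' lam nu (q1 s) (q2 s) (d0 s) (d1 s)) else 0 with hfdef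
  -- measurable sets
  have hmu : MeasurableSet {s : ℝ | 1 - q1 s - d0 s - d1 s > 0} := by
    have : Continuous fun s => 1 - q1 s - d0 s - d1 s := by continuity
    exact measurableSet_lt measurable_const this.measurable
  have hm1 : MeasurableSet {s : ℝ | d1 s > ε / 2} :=
    measurableSet_lt measurable_const hd1cont.measurable
  have hm0 : MeasurableSet {s : ℝ | d0 s > 0} :=
    measurableSet_lt measurable_const hd0cont.measurable
  -- measurability of the integrands
  have hiumeas : Measurable iu := Measurable.ite hmu measurable_const measurable_const
  have hi1meas : Measurable i1 := Measurable.ite hm1 measurable_const measurable_const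
  have hPmeas : Measurable fun s => fluidP0' lam nu (q1 s) (q2 s) (d0 s) (d1 s) := by
    simp only [fluidP0']
    apply Measurable.ite hmu measurable_const
    have : Continuous fun s => min (lam⁻¹ * (d1 s * nu + q1 s - q2 s)) 1 :=
      Continuous.min (continuous_const.mul
        (((hd1cont.mul continuous_const).add hq1cont).sub hq2cont)) continuous_const
    exact this.measurable
  have hfmeas : Measurable f :=
    Measurable.ite hm0 (measurable_const.mul (measurable_const.sub hPmeas)) measurable_const
  -- generic integrability from boundedness on the interval
  have key : ∀ (F : ℝ → ℝ) (C : ℝ), Measurable F →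
      (∀ s ∈ Set.uIoc (0:ℝ) t, |F s| ≤ C) →
      IntervalIntegrable F MeasureTheory.volume 0 t := by
    intro F C hF hC
    rw [intervalIntegrable_iff]
    have hconst : MeasureTheory.IntegrableOn (fun _ : ℝ => C) (Set.uIoc (0:ℝ) t) := by
      apply (MeasureTheory.integrableOn_const_iff (C := C)).mpr
      right
      rw [Set.uIoc, Real.volume_Ioc]
      exact ENNReal.ofReal_lt_top
    exact hconst.mono' hF.aestronglyMeasurable
      ((MeasureTheory.ae_restrict_mem measurableSet_uIoc).mono hC)
  have hIoc : Set.uIoc (0:ℝ) t ⊆ Set.Ici (0:ℝ) := by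
    rw [Set.uIoc_of_le ht]
    intro s hs; exact le_of_lt hs.1
  -- integrability
  have hgint : IntervalIntegrable g MeasureTheory.volume 0 t :=
    (continuous_const.sub hq1cont).intervalIntegrable 0 t
  have hiuint : IntervalIntegrable iu MeasureTheory.volume 0 t := by
    apply key iu 1 hiumeas
    intro s _; simp only [hiudef]; split <;> simp
  have hi1int : IntervalIntegrable i1 MeasureTheory.volume 0 t := by
    apply key i1 1 hi1meas
    intro s _; simp only [hi1def]; split <;> simp
  have hfint : IntervalIntegrable f MeasureTheory.volume 0 t := by
    apply key f (lam * (1 + max (lam⁻¹ * (nu + 1)) 1)) hfmeas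
    intro s hs
    have hs0 : (0:ℝ) ≤ s := hIoc hs
    have h1 := hq2nonneg s hs0
    have h2 := hq21 s hs0
    have h3 := hq1le s hs0
    have h4 := hd1mem s hs0
    have hx : |d1 s * nu + q1 s - q2 s| ≤ nu + 1 := by
      rw [abs_le]
      constructor
      · nlinarith [h4.1, h4.2]
      · nlinarith [h4.1, h4.2]
    have hinv : (0:ℝ) < lam⁻¹ := inv_pos.mpr hlam0
    have hP : |fluidP0' lam nu (q1 s) (q2 s) (d0 s) (d1 s)| ≤ max (lam⁻¹ * (nu + 1)) 1 := by
      rw [fluidP0']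
      split
      · simp
      · rw [abs_le]
        constructor
        · have : -(lam⁻¹ * (nu + 1)) ≤ lam⁻¹ * (d1 s * nu + q1 s - q2 s) := by
            have := (abs_le.mp hx).1
            nlinarith
          calc -max (lam⁻¹ * (nu + 1)) 1 ≤ -(lam⁻¹ * (nu + 1)) := by
                simp [neg_le_neg_iff]
            _ ≤ min (lam⁻¹ * (d1 s * nu + q1 s - q2 s)) 1 := by
                apply le_min this
                nlinarith
          
        · exact le_trans (min_le_right _ _) (le_max_right _ _)
    simp only [hfdef]
    split
    · rw [abs_mul, abs_of_pos hlam0]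
      apply mul_le_mul_of_nonneg_left _ hlam0.le
      calc |1 - fluidP0' lam nu (q1 s) (q2 s) (d0 s) (d1 s)|
          ≤ 1 + |fluidP0' lam nu (q1 s) (q2 s) (d0 s) (d1 s)| := by
            have := abs_sub (1:ℝ) (fluidP0' lam nu (q1 s) (q2 s) (d0 s) (d1 s))
            calc |1 - fluidP0' lam nu (q1 s) (q2 s) (d0 s) (d1 s)| ≤
                |(1:ℝ)| + |fluidP0' lam nu (q1 s) (q2 s) (d0 s) (d1 s)| := abs_sub _ _
              _ = 1 + _ := by rw [abs_one]
        _ ≤ 1 + max (lam⁻¹ * (nu + 1)) 1 := by linarith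
    · rw [abs_zero]
      have : (0:ℝ) ≤ max (lam⁻¹ * (nu + 1)) 1 := le_trans zero_le_one (le_max_right _ _)
      nlinarith
  -- pointwise inequality on [0, t]
  have hpt : ∀ s ∈ Set.Icc (0:ℝ) t, g s ≤ f s + iu s + i1 s := by
    intro s hs
    have hs0 : (0:ℝ) ≤ s := hs.1
    have hq1nn : 0 ≤ q1 s := le_trans (hq2nonneg s hs0) (hq21 s hs0)
    have hεν : 0 < ε * nu := mul_pos hε hnu
    simp only [hgdef, hfdef, hiudef, hi1def]
    by_cases hu : 1 - q1 s - d0 s - d1 s > 0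
    · -- u > 0 : iu = 1, f = 0 (p₀ = 1), i1 ≥ 0
      have hf0 : (if d0 s > 0 then
          lam * (1 - fluidP0' lam nu (q1 s) (q2 s) (d0 s) (d1 s)) else 0) = 0 := by
        split
        · rw [fluidP0', if_pos hu]; ring
        · rfl
      rw [hf0, if_pos hu]
      have : (0:ℝ) ≤ if d1 s > ε / 2 then (1:ℝ) else 0 := by split <;> norm_num
      linarith
    · rw [if_neg hu]
      push_neg at hu
      by_cases hd1 : d1 s > ε / 2
      · -- δ₁ large : i1 = 1, f ≥ 0
        rw [if_pos hd1]
        have hf0 : (0:ℝ) ≤ if d0 s > 0 then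
            lam * (1 - fluidP0' lam nu (q1 s) (q2 s) (d0 s) (d1 s)) else 0 := by
          split
          · apply mul_nonneg hlam0.le
            rw [fluidP0', if_neg (by push_neg; linarith)]
            have := min_le_right (lam⁻¹ * (d1 s * nu + q1 s - q2 s)) 1
            linarith
          · exact le_refl 0
        linarith
      · rw [if_neg hd1]
        push_neg at hd1
        by_cases hd0 : d0 s > 0
        · -- δ₀ > 0 case
          rw [if_pos hd0, fluidP0', if_neg (by push_neg; linarith)]
          have hmin : min (lam⁻¹ * (d1 s * nu + q1 s - q2 s)) 1 ≤
              lam⁻¹ * (d1 s * nu + q1 s - q2 s) := min_le_left _ _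
          have h5 : lam * min (lam⁻¹ * (d1 s * nu + q1 s - q2 s)) 1 ≤
              lam * (lam⁻¹ * (d1 s * nu + q1 s - q2 s)) :=
            mul_le_mul_of_nonneg_left hmin hlam0.le
          have h6 : lam * (lam⁻¹ * (d1 s * nu + q1 s - q2 s)) =
              d1 s * nu + q1 s - q2 s := by
            rw [← mul_assoc, mul_inv_cancel₀ hlam0.ne', one_mul]
          have h7 : d1 s * nu ≤ (ε / 2) * nu := mul_le_mul_of_nonneg_right hd1 hnu.le
          have h8 := hq2nonneg s hs0
          nlinarith
        · -- δ₀ = 0 : then q₁ ≥ 1 - ε/2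
          rw [if_neg hd0]
          push_neg at hd0
          have hd00 : d0 s = 0 := le_antisymm hd0 (hd0mem s hs0).1
          have hq1big : 1 - ε / 2 ≤ q1 s := by
            have := hu; rw [hd00] at this; linarith
          nlinarith
  -- combine
  have hmono := intervalIntegral.integral_mono_on ht hgint
    ((hfint.add hiuint).add hi1int) hpt
  rw [intervalIntegral.integral_add (hfint.add hiuint) hi1int,
    intervalIntegral.integral_add hfint hiuint] at hmono
  linarith
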